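/- Let X be a set, T an overlap-free subset of ⟨X⟩\{1}, and suppose some w ∈ T has length greater than 1, say w = w₁·w₂ with w₁, w₂ nonidentity elements of ⟨X⟩. In ⟨X : i(T)⟩ set x = (image of w₁) and y = (image of w₂)·i(w). Then x·y = 1 but y·x ≠ 1; moreover the elements yᵐ·xⁿ for m, n ≥ 0 are pairwise distinct (so x and y generate a bicyclic submonoid of ⟨X : i(T)⟩), and in particular y·x is a nonidentity idempotent element. -/

import Mathlib

namespace AdjoinInverses

variable {X : Type*}

/-- The embedding of the free monoid on `X` into the free monoid on `X ⊕ S`. -/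
def emb (S : Set (FreeMonoid X)) : FreeMonoid X →* FreeMonoid (X ⊕ S) :=
  FreeMonoid.map Sum.inl

/-- The generator `i(w)` corresponding to `w ∈ S`. -/
def igen (S : Set (FreeMonoid X)) (w : S) : FreeMonoid (X ⊕ S) :=
  FreeMonoid.of (Sum.inr w)

/-- The defining relations `w ⬝ i(w) = 1` and `i(w) ⬝ w = 1` for `w ∈ S`. -/
inductive InvRel (S : Set (FreeMonoid X)) : FreeMonoid (X ⊕ S) → FreeMonoid (X ⊕ S) → Prop
  | mul_inv (w : S) : InvRel S (emb S w.1 * igen S w) 1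
  | inv_mul (w : S) : InvRel S (igen S w * emb S w.1) 1

/-- The congruence generated by the defining relations. -/
def invCon (S : Set (FreeMonoid X)) : Con (FreeMonoid (X ⊕ S)) := conGen (InvRel S)

/-- The monoid `⟨X : i(S)⟩` obtained from the free monoid on `X` by universally
adjoining a two-sided inverse to each element of `S`. -/
def AdjInv (S : Set (FreeMonoid X)) : Type _ := (invCon S).Quotient

instance (S : Set (FreeMonoid X)) : Monoid (AdjInv S) := Con.monoid _

/-- The natural homomorphism `⟨X⟩ → ⟨X : i(S)⟩`. -/
def natHom (S : Set (FreeMonoid X)) : FreeMonoid X →* AdjInv S :=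
  ((invCon S).mk').comp (emb S)

/-- The adjoined inverse `i(w)`, as an element of `⟨X : i(S)⟩`. -/
def invElt (S : Set (FreeMonoid X)) (w : S) : AdjInv S :=
  (invCon S).mk' (igen S w)

/-- `S` and `S'` are inverse-equivalent: each element of `S'` becomes invertible in
`⟨X : i(S)⟩` and each element of `S` becomes invertible in `⟨X : i(S')⟩`. -/
def InvEquiv (S S' : Set (FreeMonoid X)) : Prop :=
  (∀ w ∈ S', IsUnit (natHom S w)) ∧ ∀ w ∈ S, IsUnit (natHom S' w)

/-- Two (nonidentity) elements of the free monoid overlap: one can be written `a*b`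
and the other `b*c` with `b ≠ 1` and at most one of `a`, `c` equal to `1`. -/
def Overlap (u v : FreeMonoid X) : Prop :=
  ∃ a b c : FreeMonoid X, b ≠ 1 ∧ (a ≠ 1 ∨ c ≠ 1) ∧ u = a * b ∧ v = b * c

/-- A set `T` is overlap-free if no pair of elements of `T` (distinct or not) overlap. -/
def OverlapFree (T : Set (FreeMonoid X)) : Prop :=
  ∀ u ∈ T, ∀ v ∈ T, ¬ Overlap u v

section ConfluenceMachinery

open Relation List FreeMonoid

variable {X : Type*} {T : Set (FreeMonoid X)}

/-- First redex shape: `emb w ++ [i(w)]`. -/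
def R1 (T : Set (FreeMonoid X)) (z : T) : List (X ⊕ T) :=
  List.map Sum.inl z.val.toList ++ [Sum.inr z]

/-- Second redex shape: `i(w) :: emb w`. -/
def R2 (T : Set (FreeMonoid X)) (z : T) : List (X ⊕ T) :=
  Sum.inr z :: List.map Sum.inl z.val.toList

/-- One rewriting step on lists: delete one redex. -/
def StepL (T : Set (FreeMonoid X)) (u v : List (X ⊕ T)) : Prop :=
  ∃ (l r : List (X ⊕ T)) (z : T) (s : List (X ⊕ T)), (s = R1 T z ∨ s = R2 T z) ∧ u = l ++ s ++ r ∧ v = l ++ r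

/-- One rewriting step on the free monoid. -/
def Step (T : Set (FreeMonoid X)) (u v : FreeMonoid (X ⊕ T)) : Prop :=
  StepL T u.toList v.toList

lemma toList_ne_nil {u : FreeMonoid X} (h : u ≠ 1) : u.toList ≠ [] := fun hn =>
  h (FreeMonoid.toList.injective (by rw [hn, FreeMonoid.toList_one]))

lemma ofList_ne_one {t : List X} (h : t ≠ []) : FreeMonoid.ofList t ≠ 1 := fun hn =>
  h (by simpa using congrArg FreeMonoid.toList hn)

lemma val_toList_ne_nil (h1 : (1 : FreeMonoid X) ∉ T) (z : T) : z.val.toList ≠ [] :=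
  toList_ne_nil (fun h => h1 (h ▸ z.2))

/-- Build an overlap contradiction from list data. -/
lemma overlap_of_lists (hT : OverlapFree T) {z₁ z₂ : T} {t₀ u₀ p₀ : List X}
    (hu : u₀ ≠ []) (htp : t₀ ≠ [] ∨ p₀ ≠ [])
    (h₁ : z₁.val.toList = t₀ ++ u₀) (h₂ : z₂.val.toList = u₀ ++ p₀) : False := by
  refine hT z₁.val z₁.2 z₂.val z₂.2
    ⟨FreeMonoid.ofList t₀, FreeMonoid.ofList u₀, FreeMonoid.ofList p₀,
      ofList_ne_one hu, ?_, ?_, ?_⟩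
  · rcases htp with h | h
    · exact Or.inl (ofList_ne_one h)
    · exact Or.inr (ofList_ne_one h)
  · exact FreeMonoid.toList.injective (by simpa using h₁)
  · exact FreeMonoid.toList.injective (by simpa using h₂)

lemma inr_not_mem_map_inl {α β : Type*} (q : β) (xs : List α) :
    Sum.inr q ∉ List.map (Sum.inl : α → α ⊕ β) xs := by simp

/-- Splitting a list at a distinguished `inr` letter following a run of `inl`s. -/
lemma split_inr {α β : Type*} : ∀ (p : List α) (l : List (α ⊕ β)) {q z : β}
    {rest s : List (α ⊕ β)},
    l ++ Sum.inr z :: rest = List.map Sum.inl p ++ Sum.inr q :: s →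
    (l = List.map Sum.inl p ∧ z = q ∧ rest = s) ∨
      ∃ l', l = List.map Sum.inl p ++ Sum.inr q :: l' ∧ l' ++ Sum.inr z :: rest = s := by
  intro p
  induction p with
  | nil =>
    intro l q z rest s h
    cases l with
    | nil =>
      simp only [List.map_nil, List.nil_append, List.cons.injEq, Sum.inr.injEq] at h
      exact Or.inl ⟨by simp, h.1, h.2⟩
    | cons a l' =>
      simp only [List.cons_append, List.map_nil, List.nil_append, List.cons.injEq] at h
      exact Or.inr ⟨l', by simp [h.1], h.2⟩
  | cons x p ih =>
    intro l q z rest s h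
    cases l with
    | nil =>
      exfalso
      simp only [List.nil_append, List.map_cons, List.cons_append, List.cons.injEq] at h
      exact Sum.inr_ne_inl h.1
    | cons a l' =>
      simp only [List.cons_append, List.map_cons, List.cons.injEq] at h
      obtain ⟨rfl, h⟩ := h
      rcases ih l' h with ⟨h1, h2, h3⟩ | ⟨l'', h1, h2⟩
      · exact Or.inl ⟨by rw [h1]; rfl, h2, h3⟩
      · exact Or.inr ⟨l'', by rw [h1]; rfl, h2⟩

/-- An all-`inl` run cannot extend past the `inr` letter. -/
lemma run_length_le {α β : Type*} : ∀ (p u : List α) {q : β} {r s : List (α ⊕ β)},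
    List.map Sum.inl u ++ r = List.map Sum.inl p ++ Sum.inr q :: s →
    u.length ≤ p.length := by
  intro p
  induction p with
  | nil =>
    intro u q r s h
    cases u with
    | nil => simp
    | cons y u' =>
      exfalso
      simp only [List.map_cons, List.cons_append, List.map_nil, List.nil_append,
        List.cons.injEq] at h
      exact Sum.inl_ne_inr h.1
  | cons x p ih =>
    intro u q r s h
    cases u with
    | nil => simp
    | cons y u' =>
      simp only [List.map_cons, List.cons_append, List.cons.injEq] at h
      simpa using Nat.succ_le_succ (ih u' h.2)

/-- If a redex's `inl`-run is longer than the leading `inl`-run of the word, the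
redex starts strictly later. -/
lemma long_run_split {α β : Type*} : ∀ (p : List α) (l : List (α ⊕ β)) {w : List α}
    {q z : β} {r s : List (α ⊕ β)},
    l ++ List.map Sum.inl w ++ Sum.inr z :: r = List.map Sum.inl p ++ Sum.inr q :: s →
    p.length < w.length →
    ∃ l', l = List.map Sum.inl p ++ Sum.inr q :: l' ∧
      l' ++ List.map Sum.inl w ++ Sum.inr z :: r = s := by
  intro p
  induction p with
  | nil =>
    intro l w q z r s h hlen
    cases l with
    | nil =>
      exfalso
      obtain ⟨y, w', rfl⟩ : ∃ y w', w = y :: w' := by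
        cases w with
        | nil => simp at hlen
        | cons y w' => exact ⟨y, w', rfl⟩
      simp at h
    | cons a l' =>
      simp only [List.cons_append, List.map_nil, List.nil_append, List.cons.injEq] at h
      exact ⟨l', by simp [h.1], h.2⟩
  | cons x p ih =>
    intro l w q z r s h hlen
    cases l with
    | nil =>
      exfalso
      obtain ⟨y, w', rfl⟩ : ∃ y w', w = y :: w' := by
        cases w with
        | nil => simp at hlen
        | cons y w' => exact ⟨y, w', rfl⟩
      simp only [List.nil_append, List.map_cons, List.cons_append, List.cons.injEq,
        Sum.inl.injEq] at h
      obtain ⟨rfl, h⟩ := h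
      obtain ⟨l', hl', -⟩ := ih [] (by simpa using h)
        (Nat.lt_of_succ_lt_succ (by simpa using hlen))
      have := congrArg List.length hl'
      simp at this
    | cons a l' =>
      simp only [List.cons_append, List.map_cons, List.cons.injEq] at h
      obtain ⟨rfl, h⟩ := h
      obtain ⟨l'', h1, h2⟩ := ih l' h (Nat.lt_of_succ_lt (by simpa using hlen))
      exact ⟨l'', by rw [h1]; rfl, h2⟩

end ConfluenceMachinery

section RewriteCon

open Relation List FreeMonoid

variable {X : Type*} {T : Set (FreeMonoid X)}

lemma Step.mul_left {u v : FreeMonoid (X ⊕ T)} (p : FreeMonoid (X ⊕ T)) (h : Step T u v) :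
    Step T (p * u) (p * v) := by
  obtain ⟨l, r, z, s, hs, hu, hv⟩ := h
  exact ⟨p.toList ++ l, r, z, s, hs,
    by simp [FreeMonoid.toList_mul, hu, List.append_assoc],
    by simp [FreeMonoid.toList_mul, hv, List.append_assoc]⟩

lemma Step.mul_right {u v : FreeMonoid (X ⊕ T)} (p : FreeMonoid (X ⊕ T)) (h : Step T u v) :
    Step T (u * p) (v * p) := by
  obtain ⟨l, r, z, s, hs, hu, hv⟩ := h
  exact ⟨l, r ++ p.toList, z, s, hs,
    by simp [FreeMonoid.toList_mul, hu, List.append_assoc],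
    by simp [FreeMonoid.toList_mul, hv, List.append_assoc]⟩

lemma rtg_mul {a b c d : FreeMonoid (X ⊕ T)} (h₁ : ReflTransGen (Step T) a b)
    (h₂ : ReflTransGen (Step T) c d) : ReflTransGen (Step T) (a * c) (b * d) := by
  have hl : ReflTransGen (Step T) (a * c) (b * c) :=
    ReflTransGen.lift (· * c) (fun (u v : FreeMonoid (X ⊕ T)) (h : Step T u v) => h.mul_right c) _ _ h₁
  have hr : ReflTransGen (Step T) (b * c) (b * d) :=
    ReflTransGen.lift (b * ·) (fun (u v : FreeMonoid (X ⊕ T)) (h : Step T u v) => h.mul_left b) _ _ h₂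
  exact hl.trans hr

/-- The join of the rewriting relation, as a congruence (given Church–Rosser). -/
def stepCon (T : Set (FreeMonoid X))
    (hd : Equivalence (Join (ReflTransGen (Step T)))) : Con (FreeMonoid (X ⊕ T)) where
  r := Join (ReflTransGen (Step T))
  iseqv := hd
  mul' := fun ⟨e, he1, he2⟩ ⟨f, hf1, hf2⟩ => ⟨e * f, rtg_mul he1 hf1, rtg_mul he2 hf2⟩

lemma invRel_step {a b : FreeMonoid (X ⊕ T)} (h : InvRel T a b) : Step T a b := by
  cases h with
  | mul_inv w =>
    exact ⟨[], [], w, R1 T w, Or.inl rfl,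
      by simp [R1, emb, igen, FreeMonoid.toList_mul, FreeMonoid.toList_map,
        FreeMonoid.toList_of], by simp [FreeMonoid.toList_one]⟩
  | inv_mul w =>
    exact ⟨[], [], w, R2 T w, Or.inr rfl,
      by simp [R2, emb, igen, FreeMonoid.toList_mul, FreeMonoid.toList_map,
        FreeMonoid.toList_of], by simp [FreeMonoid.toList_one]⟩

lemma invCon_join (hd : Equivalence (Join (ReflTransGen (Step T))))
    {a b : FreeMonoid (X ⊕ T)} (h : invCon T a b) : Join (ReflTransGen (Step T)) a b :=
  (Con.conGen_le (c := stepCon T hd)).2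
    (fun x y hr => ⟨y, ReflTransGen.single (invRel_step hr), ReflTransGen.refl⟩) h

lemma eq_of_rtg {u d : FreeMonoid (X ⊕ T)} (hirr : ∀ v, ¬ Step T u v)
    (h : ReflTransGen (Step T) u d) : u = d := by
  rcases h.cases_head with rfl | ⟨e, he, -⟩
  · rfl
  · exact absurd he (hirr e)

end RewriteCon

section CriticalPairs

open Relation List FreeMonoid

variable {X : Type*} {T : Set (FreeMonoid X)}

lemma map_inl_inj {t₀ p₀ : List X} (h : List.map (Sum.inl : X → X ⊕ T) t₀ = List.map Sum.inl p₀) :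
    t₀ = p₀ := List.map_injective_iff.mpr Sum.inl_injective h

lemma subtype_eq_of_toList {z₁ z₂ : T} (h : z₁.val.toList = z₂.val.toList) : z₁ = z₂ :=
  Subtype.ext (FreeMonoid.toList.injective h)

/-- Containment of one redex in another forces them to coincide. -/
lemma contain_core (h1 : (1 : FreeMonoid X) ∉ T) {z₁ z₂ : T} {s₂ t v : List (X ⊕ T)}
    (hs₂ : s₂ = R1 T z₂ ∨ s₂ = R2 T z₂)
    (hs₁ : t ++ s₂ ++ v = R1 T z₁ ∨ t ++ s₂ ++ v = R2 T z₁) :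
    t = [] ∧ v = [] := by
  obtain ⟨x₂, xs₂, hx₂⟩ := List.exists_cons_of_ne_nil (val_toList_ne_nil h1 z₂)
  rcases hs₁ with h | h <;> rcases hs₂ with rfl | rfl
  · -- s₁ = R1 z₁, s₂ = R1 z₂
    have h' : (t ++ List.map Sum.inl z₂.val.toList) ++ Sum.inr z₂ :: v =
        List.map Sum.inl z₁.val.toList ++ Sum.inr z₁ :: [] := by
      simpa [R1, List.append_assoc] using h
    rcases split_inr _ _ h' with ⟨hl, hz, hv⟩ | ⟨l', -, hl2⟩
    · subst hz
      have := congrArg List.length hl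
      simp only [List.length_append, List.length_map] at this
      exact ⟨List.length_eq_zero_iff.mp (by omega), hv⟩
    · exact absurd hl2 (by simp)
  · -- s₁ = R1 z₁, s₂ = R2 z₂
    have h' : t ++ Sum.inr z₂ :: (List.map Sum.inl z₂.val.toList ++ v) =
        List.map Sum.inl z₁.val.toList ++ Sum.inr z₁ :: [] := by
      simpa [R1, R2, List.append_assoc] using h
    rcases split_inr _ _ h' with ⟨-, -, hv⟩ | ⟨l', -, hl2⟩
    · exfalso; rw [hx₂] at hv; simp at hv
    · exact absurd hl2 (by simp)
  · -- s₁ = R2 z₁, s₂ = R1 z₂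
    exfalso
    cases t with
    | nil =>
      simp [R1, R2, hx₂] at h
    | cons a t' =>
      simp only [R1, R2, List.cons_append, List.cons.injEq] at h
      have : Sum.inr z₂ ∈ List.map (Sum.inl : X → X ⊕ T) z₁.val.toList := by
        rw [← h.2]; simp
      simp at this
  · -- s₁ = R2 z₁, s₂ = R2 z₂
    cases t with
    | nil =>
      simp only [R2, List.nil_append, List.cons_append, List.cons.injEq, Sum.inr.injEq] at h
      obtain ⟨hz, hl⟩ := h
      subst hz
      have := congrArg List.length hl
      simp only [List.length_append, List.length_map] at this
      exact ⟨rfl, List.length_eq_zero_iff.mp (by omega)⟩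
    | cons a t' =>
      exfalso
      simp only [R2, List.cons_append, List.cons.injEq] at h
      have : Sum.inr z₂ ∈ List.map (Sum.inl : X → X ⊕ T) z₁.val.toList := by
        rw [← h.2]
        simp
      simp at this

/-- A proper overlap of two redexes: the flanking pieces agree (possibly after
deriving a contradiction with overlap-freeness). -/
lemma overlap_core (h1 : (1 : FreeMonoid X) ∉ T) (hT : OverlapFree T) {z₁ z₂ : T}
    {t u v : List (X ⊕ T)} (hu : u ≠ [])
    (hs₁ : t ++ u = R1 T z₁ ∨ t ++ u = R2 T z₁)
    (hs₂ : u ++ v = R1 T z₂ ∨ u ++ v = R2 T z₂) :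
    t = v := by
  obtain ⟨x₂, xs₂, hx₂⟩ := List.exists_cons_of_ne_nil (val_toList_ne_nil h1 z₂)
  rcases hs₁ with h | h
  · -- s₁ = R1 z₁
    rcases List.append_eq_append_iff.mp (h.trans (rfl : R1 T z₁ =
        List.map Sum.inl z₁.val.toList ++ [Sum.inr z₁])) with ⟨p, hmap, hu'⟩ | ⟨p, ht, hpu⟩
    · -- t ++ p = map inl z₁l, u = p ++ [inr z₁]
      obtain ⟨t₀, p₀, hz₁l, ht₀, hp₀⟩ := List.map_eq_append_iff.mp hmap
      subst ht₀ hp₀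
      rcases hs₂ with h2 | h2
      · -- s₂ = R1 z₂
        have h2' : List.map Sum.inl p₀ ++ Sum.inr z₁ :: v =
            List.map Sum.inl z₂.val.toList ++ Sum.inr z₂ :: [] := by
          simpa [R1, hu', List.append_assoc] using h2
        rcases split_inr _ _ h2' with ⟨hl, hz, hv⟩ | ⟨l', hl, -⟩
        · have hp₀z : p₀ = z₂.val.toList := map_inl_inj hl
          by_cases ht₀ : t₀ = []
          · subst ht₀
            have : z₁ = z₂ := subtype_eq_of_toList (by rw [hz₁l, hp₀z]; simp)
            simp [hv]
          · exact (overlap_of_lists (z₁ := z₁) (z₂ := z₂) (t₀ := t₀) (u₀ := p₀)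
              (p₀ := []) hT (by rw [hp₀z]; exact val_toList_ne_nil h1 z₂)
              (Or.inl ht₀) hz₁l (by simp [hp₀z])).elim
        · exfalso
          have : Sum.inr z₂ ∈ List.map (Sum.inl : X → X ⊕ T) p₀ := by rw [hl]; simp
          simp at this
      · -- s₂ = R2 z₂
        cases p₀ with
        | nil =>
          have hu'' : u = [Sum.inr z₁] := by simpa using hu'
          rw [hu''] at h2
          simp only [R2, List.singleton_append, List.cons.injEq, Sum.inr.injEq] at h2
          obtain ⟨hz, hv⟩ := h2
          subst hz
          rw [hv]
          have ht₀ : t₀ = z₁.val.toList := by simpa using hz₁l.symm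
          rw [ht₀]
        | cons b p₀' =>
          exfalso
          rw [hu'] at h2
          simp [R2] at h2
    · -- t = map inl z₁l ++ p, [inr z₁] = p ++ u
      cases p with
      | nil =>
        simp only [List.nil_append] at hpu
        subst hpu
        rcases hs₂ with h2 | h2
        · exfalso
          simp [R1, hx₂] at h2
        · simp only [R2, List.singleton_append, List.cons.injEq, Sum.inr.injEq] at h2
          obtain ⟨hz, hv⟩ := h2
          subst hz
          rw [ht, hv]
          simp
      | cons a p' =>
        exfalso
        simp only [List.cons_append, List.cons.injEq] at hpu
        exact hu (List.append_eq_nil_iff.mp hpu.2.symm).2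
  · -- s₁ = R2 z₁
    cases t with
    | nil =>
      simp only [List.nil_append] at h
      subst h
      rcases hs₂ with h2 | h2
      · exfalso
        simp [R1, R2, hx₂] at h2
      · simp only [R1, R2, List.cons_append, List.cons.injEq, Sum.inr.injEq] at h2
        obtain ⟨hz, hl⟩ := h2
        subst hz
        have := congrArg List.length hl
        simp only [List.length_append, List.length_map] at this
        exact (List.length_eq_zero_iff.mp (by omega) : v = []).symm
    | cons a t' =>
      simp only [R2, List.cons_append, List.cons.injEq] at h
      obtain ⟨ha, h⟩ := h
      subst ha
      obtain ⟨t₀, u₀, hz₁l, ht₀, hu₀⟩ := List.map_eq_append_iff.mp h.symm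
      subst ht₀ hu₀
      have hu₀ne : u₀ ≠ [] := fun hn => hu (by simp [hn])
      rcases hs₂ with h2 | h2
      · -- s₂ = R1 z₂
        rcases List.append_eq_append_iff.mp (h2.trans (rfl : R1 T z₂ =
            List.map Sum.inl z₂.val.toList ++ [Sum.inr z₂])) with
          ⟨p, hmap, hv⟩ | ⟨p, hmap, hpv⟩
        · -- map inl z₂l = map inl u₀ ++ p, v = p ++ [inr z₂]
          obtain ⟨c₁, p₀, hz₂l, hc₁, hp₀⟩ := List.map_eq_append_iff.mp hmap
          obtain rfl : c₁ = u₀ := map_inl_inj hc₁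
          subst hp₀
          by_cases htp : t₀ = [] ∧ p₀ = []
          · obtain ⟨rfl, rfl⟩ := htp
            have hz : z₁ = z₂ := subtype_eq_of_toList (by rw [hz₁l, hz₂l]; simp)
            subst hz
            rw [hv]
            simp
          · exact (overlap_of_lists hT hu₀ne (by tauto) hz₁l hz₂l).elim
        · -- map inl u₀ = map inl z₂l ++ p, [inr z₂] = p ++ v
          obtain ⟨c₁, c₂, hu₀eq, hc₁, hc₂⟩ := List.map_eq_append_iff.mp hmap
          obtain rfl : c₁ = z₂.val.toList := map_inl_inj hc₁
          subst hc₂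
          cases c₂ with
          | nil =>
            simp only [List.map_nil, List.nil_append] at hpv
            subst hpv
            have hu₀' : u₀ = z₂.val.toList := by simpa using hu₀eq
            subst hu₀'
            by_cases ht₀ : t₀ = []
            · subst ht₀
              have hz : z₁ = z₂ := subtype_eq_of_toList (by simpa using hz₁l)
              subst hz
              simp
            · exact (overlap_of_lists (z₁ := z₁) (z₂ := z₂) (t₀ := t₀)
                (u₀ := z₂.val.toList) (p₀ := []) hT (val_toList_ne_nil h1 z₂)
                (Or.inl ht₀) hz₁l (by simp)).elim
          | cons y c₂' =>
            exfalso
            simp at hpv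
      · -- s₂ = R2 z₂
        exfalso
        obtain ⟨y, u₀', rfl⟩ := List.exists_cons_of_ne_nil hu₀ne
        simp [R2] at h2

end CriticalPairs

section Confluence

open Relation List FreeMonoid

variable {X : Type*} {T : Set (FreeMonoid X)}

lemma locAux (h1 : (1 : FreeMonoid X) ∉ T) (hT : OverlapFree T)
    {l₁ r₁ r₂ t : List (X ⊕ T)} {z₁ z₂ : T} {s₁ s₂ : List (X ⊕ T)}
    (hs₁ : s₁ = R1 T z₁ ∨ s₁ = R2 T z₁) (hs₂ : s₂ = R1 T z₂ ∨ s₂ = R2 T z₂)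
    (heq : s₁ ++ r₁ = t ++ (s₂ ++ r₂)) :
    l₁ ++ r₁ = (l₁ ++ t) ++ r₂ ∨
      ∃ d, StepL T (l₁ ++ r₁) d ∧ StepL T ((l₁ ++ t) ++ r₂) d := by
  rcases List.append_eq_append_iff.mp heq with ⟨p, hp, hr₁⟩ | ⟨u, hs, h₂⟩
  · -- disjoint: t = s₁ ++ p, r₁ = p ++ (s₂ ++ r₂)
    subst hp hr₁
    refine Or.inr ⟨l₁ ++ (p ++ r₂),
      ⟨l₁ ++ p, r₂, z₂, s₂, hs₂, by simp [List.append_assoc], by simp [List.append_assoc]⟩,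
      ⟨l₁, p ++ r₂, z₁, s₁, hs₁, by simp [List.append_assoc], by simp⟩⟩
  · subst hs
    by_cases hu : u = []
    · subst hu
      simp only [List.nil_append] at h₂
      subst h₂
      exact Or.inr ⟨l₁ ++ r₂,
        ⟨l₁, r₂, z₂, s₂, hs₂, by simp [List.append_assoc], rfl⟩,
        ⟨l₁, r₂, z₁, t ++ [], by simpa using hs₁, by simp [List.append_assoc], rfl⟩⟩
    · rcases List.append_eq_append_iff.mp h₂ with ⟨a', ha', hr₂⟩ | ⟨c', hc', hr₁'⟩
      · -- u = s₂ ++ a' : containment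
        subst ha' hr₂
        obtain ⟨rfl, rfl⟩ := contain_core h1 hs₂ (hs₁.imp
          (fun h => by simpa [List.append_assoc] using h)
          (fun h => by simpa [List.append_assoc] using h))
        left
        simp
      · -- s₂ = u ++ c' : proper overlap
        subst hc' hr₁'
        obtain rfl : t = c' := overlap_core h1 hT hu hs₁ hs₂
        left
        simp [List.append_assoc]

lemma locConf (h1 : (1 : FreeMonoid X) ∉ T) (hT : OverlapFree T)
    {u b c : FreeMonoid (X ⊕ T)} (hb : Step T u b) (hc : Step T u c) :
    ∃ d, ReflGen (Step T) b d ∧ ReflTransGen (Step T) c d := by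
  obtain ⟨l₁, r₁, z₁, s₁, hs₁, hu₁, hv₁⟩ := hb
  obtain ⟨l₂, r₂, z₂, s₂, hs₂, hu₂, hv₂⟩ := hc
  have heq : l₁ ++ (s₁ ++ r₁) = l₂ ++ (s₂ ++ r₂) := by
    simpa [List.append_assoc] using hu₁.symm.trans hu₂
  rcases List.append_eq_append_iff.mp heq with ⟨t, ht, h⟩ | ⟨t, ht, h⟩
  · rcases locAux (l₁ := l₁) h1 hT hs₁ hs₂ h with he | ⟨d, hd1, hd2⟩
    · have hbc : b = c := FreeMonoid.toList.injective (by rw [hv₁, hv₂, ht, he])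
      exact ⟨c, hbc ▸ ReflGen.refl, ReflTransGen.refl⟩
    · refine ⟨FreeMonoid.ofList d, ReflGen.single ?_, ReflTransGen.single ?_⟩
      · show StepL T b.toList (FreeMonoid.ofList d).toList
        rw [FreeMonoid.toList_ofList, hv₁]
        exact hd1
      · show StepL T c.toList (FreeMonoid.ofList d).toList
        rw [FreeMonoid.toList_ofList, hv₂, ht]
        exact hd2
  · rcases locAux (l₁ := l₂) h1 hT hs₂ hs₁ h with he | ⟨d, hd1, hd2⟩
    · have hbc : b = c := FreeMonoid.toList.injective (by rw [hv₁, hv₂, ht, he])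
      exact ⟨c, hbc ▸ ReflGen.refl, ReflTransGen.refl⟩
    · refine ⟨FreeMonoid.ofList d, ReflGen.single ?_, ReflTransGen.single ?_⟩
      · show StepL T b.toList (FreeMonoid.ofList d).toList
        rw [FreeMonoid.toList_ofList, hv₁, ht]
        exact hd2
      · show StepL T c.toList (FreeMonoid.ofList d).toList
        rw [FreeMonoid.toList_ofList, hv₂]
        exact hd1

lemma step_equivalence (h1 : (1 : FreeMonoid X) ∉ T) (hT : OverlapFree T) :
    Equivalence (Join (ReflTransGen (Step T))) :=
  Relation.equivalence_join_reflTransGen (fun _ _ _ hb hc => locConf h1 hT hb hc)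

end Confluence

section NormalForms

open Relation List FreeMonoid

variable {X : Type*} {T : Set (FreeMonoid X)}

/-- `flat b n` is the word `b^n`. -/
def flat (b : List X) : ℕ → List X
  | 0 => []
  | n + 1 => b ++ flat b n

/-- The normal form of `y^m x^n`. -/
def NF (T : Set (FreeMonoid X)) (a b : List X) (z : T) : ℕ → ℕ → List (X ⊕ T)
  | 0, n => List.map Sum.inl (flat b n)
  | m + 1, n => List.map Sum.inl a ++ Sum.inr z :: NF T a b z m n

lemma flat_succ' (b : List X) : ∀ n, flat b (n + 1) = flat b n ++ b := by
  intro n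
  induction n with
  | zero => simp [flat]
  | succ n ih =>
    calc flat b (n + 2) = b ++ flat b (n + 1) := rfl
    _ = b ++ (flat b n ++ b) := by rw [ih]
    _ = (b ++ flat b n) ++ b := by rw [List.append_assoc]
    _ = flat b (n + 1) ++ b := rfl

lemma flat_length (b : List X) : ∀ n, (flat b n).length = n * b.length
  | 0 => by simp [flat]
  | n + 1 => by
    rw [show flat b (n + 1) = b ++ flat b n from rfl]
    simp [flat_length b n, Nat.succ_mul, Nat.add_comm]

lemma key_prefix {a b : List X} (ha : a ≠ []) (hb : b ≠ [])
    (hno : ∀ c, c ≠ [] → b ++ a = a ++ c → False) :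
    ∀ n, ¬ (b ++ a) <+: flat b n := by
  intro n h
  cases n with
  | zero =>
    rw [show flat b 0 = [] from rfl, List.prefix_nil] at h
    exact hb (List.append_eq_nil_iff.mp h).1
  | succ n =>
    rw [show flat b (n + 1) = b ++ flat b n from rfl] at h
    have ha' : a <+: flat b n := (List.prefix_append_right_inj b).mp h
    have haf : a <+: b ++ flat b n := by
      rw [show b ++ flat b n = flat b (n + 1) from rfl, flat_succ' b n]
      exact ha'.trans ⟨b, rfl⟩
    have hle : a.length ≤ (b ++ a).length := by simp
    obtain ⟨c, hc⟩ := List.prefix_of_prefix_length_le haf h hle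
    have hclen : c.length = b.length := by
      have := congrArg List.length hc
      simp at this
      omega
    have hcne : c ≠ [] := by
      intro hn
      rw [hn] at hclen
      simp at hclen
      exact hb (List.length_eq_zero_iff.mp hclen.symm)
    exact hno c hcne hc.symm

lemma NF_inr : ∀ (m n : ℕ) (q : T) {a b : List X} {z : T},
    Sum.inr q ∈ NF T a b z m n → q = z := by
  intro m
  induction m with
  | zero =>
    intro n q a b z h
    exfalso
    simp only [NF] at h
    simp at h
  | succ m ih =>
    intro n q a b z h
    simp only [NF, List.mem_append, List.mem_cons] at h
    rcases h with h | h | h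
    · simp at h
    · exact Sum.inr.inj h
    · exact ih n q h

lemma NF_noR1 {a b : List X} {z : T} (hlen : a.length < z.val.toList.length) :
    ∀ (m : ℕ) (n : ℕ) (l r : List (X ⊕ T)),
    NF T a b z m n = l ++ List.map Sum.inl z.val.toList ++ Sum.inr z :: r → False := by
  intro m
  induction m with
  | zero =>
    intro n l r h
    have : Sum.inr z ∈ NF T a b z 0 n := by
      rw [h]; simp
    simp only [NF] at this
    simp at this
  | succ m ih =>
    intro n l r h
    obtain ⟨l', -, h2⟩ := long_run_split a l (by
      simpa [NF, List.append_assoc] using h.symm) hlen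
    exact ih n l' r h2.symm

lemma NF_noR2 {a b : List X} {z : T} (ha : a ≠ []) (hb : b ≠ [])
    (hzl : z.val.toList = b ++ a)
    (hno : ∀ c, c ≠ [] → b ++ a = a ++ c → False) :
    ∀ (m : ℕ) (n : ℕ) (l r : List (X ⊕ T)),
    NF T a b z m n = l ++ Sum.inr z :: (List.map Sum.inl z.val.toList ++ r) → False := by
  intro m
  induction m with
  | zero =>
    intro n l r h
    have : Sum.inr z ∈ NF T a b z 0 n := by rw [h]; simp
    simp only [NF] at this
    simp at this
  | succ m ih =>
    intro n l r h
    have h' : l ++ Sum.inr z :: (List.map Sum.inl z.val.toList ++ r) =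
        List.map Sum.inl a ++ Sum.inr z :: NF T a b z m n := by
      simpa [NF] using h.symm
    rcases split_inr _ _ h' with ⟨-, -, hrest⟩ | ⟨l', -, h2⟩
    · -- map inl z.val.toList ++ r = NF m n
      cases m with
      | zero =>
        simp only [NF] at hrest
        obtain ⟨u', r', hfl, hu', -⟩ := List.map_eq_append_iff.mp hrest.symm
        obtain rfl : u' = z.val.toList := map_inl_inj hu'
        exact key_prefix ha hb hno n (hzl ▸ ⟨r', hfl.symm⟩)
      | succ m' =>
        have := run_length_le a z.val.toList (by simpa [NF] using hrest)
        rw [hzl, List.length_append] at this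
        have hane : a ≠ [] := ha
        have hb0 : b.length = 0 := by omega
        exact hb (List.length_eq_zero_iff.mp hb0)
    · exact ih n l' r h2.symm

lemma NF_injective {a b : List X} {z : T} (hb : b ≠ []) :
    ∀ (m m' n n' : ℕ), NF T a b z m n = NF T a b z m' n' → m = m' ∧ n = n' := by
  intro m
  induction m with
  | zero =>
    intro m' n n' h
    cases m' with
    | zero =>
      simp only [NF] at h
      have := congrArg List.length h
      simp only [List.length_map, flat_length] at this
      refine ⟨rfl, ?_⟩
      have hbl : 0 < b.length := List.length_pos_iff.mpr hb
      exact Nat.eq_of_mul_eq_mul_right hbl this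
    | succ m'' =>
      exfalso
      have : Sum.inr z ∈ NF T a b z 0 n := by rw [h]; simp [NF]
      simp only [NF] at this
      simp at this
  | succ m ih =>
    intro m' n n' h
    cases m' with
    | zero =>
      exfalso
      have : Sum.inr z ∈ NF T a b z 0 n' := by rw [← h]; simp [NF]
      simp only [NF] at this
      simp at this
    | succ m'' =>
      simp only [NF] at h
      have h' := List.append_cancel_left h
      have h'' : NF T a b z m n = NF T a b z m'' n' := by simpa using h'
      obtain ⟨m1, n1⟩ := ih m'' n n' h''
      exact ⟨by omega, n1⟩

end NormalForms

/-- if some `w ∈ T` factors as `w₁ * w₂` with `w₁, w₂ ≠ 1`, then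
`x = w₁` and `y = w₂ ⬝ i(w)` generate a bicyclic submonoid of `⟨X : i(T)⟩`:
`x*y = 1`, `y*x ≠ 1`, the elements `y^m * x^n` are pairwise distinct, and `y*x` is a
nonidentity idempotent. -/
theorem stmt13 (X : Type*) (T : Set (FreeMonoid X))
    (h1 : (1 : FreeMonoid X) ∉ T) (hT : OverlapFree T)
    (w : FreeMonoid X) (hw : w ∈ T) (w₁ w₂ : FreeMonoid X)
    (hw1 : w₁ ≠ 1) (hw2 : w₂ ≠ 1) (hfac : w = w₁ * w₂)
    (x y : AdjInv T) (hx : x = natHom T w₁)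
    (hy : y = natHom T w₂ * invElt T ⟨w, hw⟩) :
    x * y = 1 ∧ y * x ≠ 1 ∧
    (∀ m n m' n' : ℕ, y ^ m * x ^ n = y ^ m' * x ^ n' → m = m' ∧ n = n') ∧
    (y * x) * (y * x) = y * x := by
  subst hx hy
  have hzl : ((⟨w, hw⟩ : T) : FreeMonoid X).toList = w₁.toList ++ w₂.toList := by
    show w.toList = _
    rw [hfac, FreeMonoid.toList_mul]
  have ha : w₂.toList ≠ [] := toList_ne_nil hw2
  have hb : w₁.toList ≠ [] := toList_ne_nil hw1
  have hno : ∀ c, c ≠ [] → w₁.toList ++ w₂.toList = w₂.toList ++ c → False := by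
    intro c hc hcc
    refine hT w hw w hw ⟨w₁, w₂, FreeMonoid.ofList c, hw2, Or.inl hw1, hfac, ?_⟩
    apply FreeMonoid.toList.injective
    rw [hfac, FreeMonoid.toList_mul, FreeMonoid.toList_mul, FreeMonoid.toList_ofList]
    exact hcc
  have hequiv := step_equivalence h1 hT
  -- normal forms
  have hYlist : ∀ m n : ℕ,
      ((emb T w₂ * igen T ⟨w, hw⟩) ^ m * (emb T w₁) ^ n).toList =
        NF T w₂.toList w₁.toList ⟨w, hw⟩ m n := by
    intro m n
    induction m with
    | zero =>
      simp only [pow_zero, one_mul, NF]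
      induction n with
      | zero => simp [flat, pow_zero, FreeMonoid.toList_one]
      | succ n ihn =>
        rw [pow_succ', FreeMonoid.toList_mul, ihn]
        show (FreeMonoid.map Sum.inl w₁).toList ++ _ = _
        rw [FreeMonoid.toList_map, show flat w₁.toList (n + 1) =
          w₁.toList ++ flat w₁.toList n from rfl]
        simp
    | succ m ihm =>
      rw [pow_succ', mul_assoc, FreeMonoid.toList_mul, ihm]
      show ((emb T w₂).toList ++ (igen T ⟨w, hw⟩).toList) ++ _ = _
      show ((FreeMonoid.map Sum.inl w₂).toList ++
        (FreeMonoid.of (Sum.inr (⟨w, hw⟩ : T))).toList) ++ _ = _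
      rw [FreeMonoid.toList_map, FreeMonoid.toList_of]
      simp [NF]
  -- irreducibility
  have hirr : ∀ m n : ℕ, ∀ v,
      ¬ Step T ((emb T w₂ * igen T ⟨w, hw⟩) ^ m * (emb T w₁) ^ n) v := by
    rintro m n v ⟨l, r, z', s, hs, hu, -⟩
    have hz' : z' = ⟨w, hw⟩ := by
      refine NF_inr m n z' (a := w₂.toList) (b := w₁.toList) (z := ⟨w, hw⟩) ?_
      rw [← hYlist m n, hu]
      rcases hs with rfl | rfl <;> simp [R1, R2]
    subst hz'
    rw [hYlist m n] at hu
    rcases hs with rfl | rfl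
    · refine NF_noR1 ?_ m n l r (by simpa [R1, List.append_assoc] using hu)
      rw [hzl, List.length_append]
      have := List.length_pos_iff.mpr hb
      omega
    · exact NF_noR2 ha hb hzl hno m n l r
        (by simpa [R2, List.append_assoc] using hu)
  -- equality in the quotient gives equality of normal forms
  have hdist : ∀ m n m' n' : ℕ,
      (natHom T w₂ * invElt T ⟨w, hw⟩) ^ m * natHom T w₁ ^ n =
        (natHom T w₂ * invElt T ⟨w, hw⟩) ^ m' * natHom T w₁ ^ n' →
      m = m' ∧ n = n' := by
    have e1 : ∀ m n : ℕ, (natHom T w₂ * invElt T ⟨w, hw⟩) ^ m * natHom T w₁ ^ n =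
        (invCon T).mk' ((emb T w₂ * igen T ⟨w, hw⟩) ^ m * (emb T w₁) ^ n) := by
      intro m n
      rw [map_mul, map_pow, map_pow, map_mul]
      rfl
    intro m n m' n' hmn
    rw [e1, e1] at hmn
    have hcon : invCon T ((emb T w₂ * igen T ⟨w, hw⟩) ^ m * (emb T w₁) ^ n)
        ((emb T w₂ * igen T ⟨w, hw⟩) ^ m' * (emb T w₁) ^ n') :=
      (Con.eq _).mp hmn
    obtain ⟨d, hd1, hd2⟩ := invCon_join hequiv hcon
    have e2 := eq_of_rtg (hirr m n) hd1
    have e3 := eq_of_rtg (hirr m' n') hd2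
    have hNF : NF T w₂.toList w₁.toList ⟨w, hw⟩ m n =
        NF T w₂.toList w₁.toList ⟨w, hw⟩ m' n' := by
      rw [← hYlist, ← hYlist, e2.trans e3.symm]
    exact NF_injective hb m m' n n' hNF
  -- x * y = 1
  have hxy : natHom T w₁ * (natHom T w₂ * invElt T ⟨w, hw⟩) = 1 := by
    have hrel : invCon T (emb T w₁ * (emb T w₂ * igen T ⟨w, hw⟩)) 1 := by
      have hword : emb T w₁ * (emb T w₂ * igen T ⟨w, hw⟩) =
          emb T ((⟨w, hw⟩ : T) : FreeMonoid X) * igen T ⟨w, hw⟩ := by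
        rw [show ((⟨w, hw⟩ : T) : FreeMonoid X) = w₁ * w₂ from hfac, map_mul, mul_assoc]
      rw [hword]
      exact ConGen.Rel.of _ _ (InvRel.mul_inv _)
    have hq : ((invCon T).mk') (emb T w₁ * (emb T w₂ * igen T ⟨w, hw⟩)) =
        ((invCon T).mk') 1 := (Con.eq _).mpr hrel
    rw [map_mul, map_mul, map_one] at hq
    exact hq
  refine ⟨hxy, ?_, hdist, ?_⟩
  · intro hcontra
    have h11 : (natHom T w₂ * invElt T ⟨w, hw⟩) ^ 1 * natHom T w₁ ^ 1 =
        (natHom T w₂ * invElt T ⟨w, hw⟩) ^ 0 * natHom T w₁ ^ 0 := by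
      simp only [pow_one, pow_zero, one_mul, mul_one]
      exact hcontra
    exact absurd (hdist 1 1 0 0 h11).1 one_ne_zero
  · rw [mul_assoc, ← mul_assoc (natHom T w₁), hxy, one_mul]


end AdjoinInverses
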